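/- Let L, g : {a,…,b-1} × ℝ × ℝ → ℝ be C¹ in the last two variables, with a < b integers. For y : {a,…,b} → ℝ define Δy(t) = y(t+1) - y(t), J(y) = ∑_{t=a}^{b-1} L(t, y(t+1), Δy(t)), and I(y) = ∑_{t=a}^{b-1} g(t, y(t+1), Δy(t)). Suppose y⋆ is a local minimizer of J among sequences with y(a) = y_a, y(b) = y_b, and I(y) = l, and suppose y⋆ is not an extremal of I, i.e., t ↦ g_v(t, y⋆(t+1), Δy⋆(t)) - ∑_{τ=a}^{t-1} g_x(τ, y⋆(τ+1), Δy⋆(τ)) is not constant on {a,…,b-1}. Then there exists λ ∈ ℝ such that, with F = L - λg, the discrete Euler–Lagrange equation Δ[F_v(t, y⋆(t+1), Δy⋆(t))] - F_x(t, y⋆(t+1), Δy⋆(t)) = 0 holds for all t ∈ {a,…,b-2}. -/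

import Mathlib

open Finset


noncomputable def isoZ_extF (a b : ℤ) (ystar : ℤ → ℝ) (u : {x // x ∈ Finset.Ioo a b} → ℝ) (t : ℤ) : ℝ :=
  if h : t ∈ Finset.Ioo a b then u ⟨t, h⟩ else ystar t

noncomputable def isoZ_pmap (a b : ℤ) (s : ℤ) : ({x // x ∈ Finset.Ioo a b} → ℝ) →L[ℝ] ℝ :=
  if h : s ∈ Finset.Ioo a b then ContinuousLinearMap.proj ⟨s, h⟩ else 0

lemma isoZ_extF_star (a b : ℤ) (ystar : ℤ → ℝ) (t : ℤ) :
    isoZ_extF a b ystar (fun s => ystar s.1) t = ystar t := by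
  unfold isoZ_extF; split_ifs <;> rfl

lemma isoZ_extF_eq (a b : ℤ) (ystar : ℤ → ℝ) (u : {x // x ∈ Finset.Ioo a b} → ℝ) (t : ℤ) :
    isoZ_extF a b ystar u t = isoZ_pmap a b t u + (if t ∈ Finset.Ioo a b then 0 else ystar t) := by
  unfold isoZ_extF isoZ_pmap
  split_ifs with h
  · simp
  · simp

lemma isoZ_hasStrict_ext (a b : ℤ) (ystar : ℤ → ℝ) (t : ℤ) (u₀ : {x // x ∈ Finset.Ioo a b} → ℝ) :
    HasStrictFDerivAt (fun u => isoZ_extF a b ystar u t) (isoZ_pmap a b t) u₀ := by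
  have : (fun u => isoZ_extF a b ystar u t)
      = fun u => isoZ_pmap a b t u + (if t ∈ Finset.Ioo a b then 0 else ystar t) :=
    funext fun u => isoZ_extF_eq a b ystar u t
  rw [this]
  exact ((isoZ_pmap a b t).hasStrictFDerivAt).add_const _

lemma isoZ_pmap_single (a b j : ℤ) (hj : j ∈ Finset.Ioo a b) (s : ℤ) :
    isoZ_pmap a b s (Pi.single ⟨j, hj⟩ 1) = if s = j then 1 else 0 := by
  unfold isoZ_pmap
  split_ifs with h h2 h3
  · subst h2; simp
  · simp only [ContinuousLinearMap.proj_apply, Pi.single_apply]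
    rw [if_neg]
    intro hh
    exact h2 (congrArg Subtype.val hh)
  · exact absurd (h3 ▸ hj) h
  · simp

lemma isoZ_fderiv_fst (F : ℝ → ℝ → ℝ) (x0 v0 : ℝ)
    (hF : DifferentiableAt ℝ (fun p : ℝ × ℝ => F p.1 p.2) (x0, v0)) :
    fderiv ℝ (fun p : ℝ × ℝ => F p.1 p.2) (x0, v0) (1, 0) = deriv (fun x => F x v0) x0 := by
  have h := hF.hasFDerivAt.comp_hasDerivAt x0
    ((hasDerivAt_id x0).prodMk (hasDerivAt_const x0 v0))
  exact (h.deriv).symm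

lemma isoZ_fderiv_snd (F : ℝ → ℝ → ℝ) (x0 v0 : ℝ)
    (hF : DifferentiableAt ℝ (fun p : ℝ × ℝ => F p.1 p.2) (x0, v0)) :
    fderiv ℝ (fun p : ℝ × ℝ => F p.1 p.2) (x0, v0) (0, 1) = deriv (fun v => F x0 v) v0 := by
  have h := hF.hasFDerivAt.comp_hasDerivAt v0
    ((hasDerivAt_const v0 x0).prodMk (hasDerivAt_id v0))
  exact (h.deriv).symm

noncomputable def isoZ_DF (a b : ℤ) (ystar : ℤ → ℝ) (F : ℤ → ℝ → ℝ → ℝ) :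
    ({x // x ∈ Finset.Ioo a b} → ℝ) →L[ℝ] ℝ :=
  ∑ t ∈ Finset.Ico a b,
    (fderiv ℝ (fun p : ℝ × ℝ => F t p.1 p.2) (ystar (t + 1), ystar (t + 1) - ystar t)).comp
      ((isoZ_pmap a b (t + 1)).prod (isoZ_pmap a b (t + 1) - isoZ_pmap a b t))

lemma isoZ_hasStrict_JF (a b : ℤ) (ystar : ℤ → ℝ) (F : ℤ → ℝ → ℝ → ℝ)
    (hF : ∀ t ∈ Finset.Ico a b, ContDiff ℝ 1 (fun p : ℝ × ℝ => F t p.1 p.2)) :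
    HasStrictFDerivAt
      (fun u => ∑ t ∈ Finset.Ico a b,
        F t (isoZ_extF a b ystar u (t + 1)) (isoZ_extF a b ystar u (t + 1) - isoZ_extF a b ystar u t))
      (isoZ_DF a b ystar F) (fun s => ystar s.1) := by
  apply HasStrictFDerivAt.fun_sum
  intro t ht
  have hin : HasStrictFDerivAt
      (fun u : {x // x ∈ Finset.Ioo a b} → ℝ =>
        (isoZ_extF a b ystar u (t + 1), isoZ_extF a b ystar u (t + 1) - isoZ_extF a b ystar u t))
      ((isoZ_pmap a b (t + 1)).prod (isoZ_pmap a b (t + 1) - isoZ_pmap a b t)) (fun s => ystar s.1) :=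
    (isoZ_hasStrict_ext a b ystar (t + 1) _).prodMk
      ((isoZ_hasStrict_ext a b ystar (t + 1) _).sub (isoZ_hasStrict_ext a b ystar t _))
  have hpt : ((isoZ_extF a b ystar (fun s => ystar s.1) (t + 1)),
      isoZ_extF a b ystar (fun s => ystar s.1) (t + 1) - isoZ_extF a b ystar (fun s => ystar s.1) t)
      = (ystar (t + 1), ystar (t + 1) - ystar t) := by
    simp [isoZ_extF_star]
  have hout : HasStrictFDerivAt (fun p : ℝ × ℝ => F t p.1 p.2)
      (fderiv ℝ (fun p : ℝ × ℝ => F t p.1 p.2) (ystar (t + 1), ystar (t + 1) - ystar t))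
      ((isoZ_extF a b ystar (fun s => ystar s.1) (t + 1)),
        isoZ_extF a b ystar (fun s => ystar s.1) (t + 1) - isoZ_extF a b ystar (fun s => ystar s.1) t) := by
    rw [hpt]
    exact ((hF t ht).contDiffAt).hasStrictFDerivAt one_ne_zero
  exact HasStrictFDerivAt.comp (fun s : {x // x ∈ Finset.Ioo a b} => ystar s.1)
    (f := fun u : {x // x ∈ Finset.Ioo a b} → ℝ =>
      (isoZ_extF a b ystar u (t + 1), isoZ_extF a b ystar u (t + 1) - isoZ_extF a b ystar u t))
    hout hin

lemma isoZ_DF_single (a b : ℤ) (ystar : ℤ → ℝ) (F : ℤ → ℝ → ℝ → ℝ)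
    (hF : ∀ t ∈ Finset.Ico a b, ContDiff ℝ 1 (fun p : ℝ × ℝ => F t p.1 p.2))
    (t : ℤ) (ht : t ∈ Finset.Ico a (b - 1)) (hmem : t + 1 ∈ Finset.Ioo a b) :
    isoZ_DF a b ystar F (Pi.single ⟨t + 1, hmem⟩ 1)
      = deriv (fun x => F t x (ystar (t + 1) - ystar t)) (ystar (t + 1))
        + deriv (fun v => F t (ystar (t + 1)) v) (ystar (t + 1) - ystar t)
        - deriv (fun v => F (t + 1) (ystar (t + 2)) v) (ystar (t + 2) - ystar (t + 1)) := by
  have htab : t ∈ Finset.Ico a b := by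
    simp only [Finset.mem_Ico] at ht ⊢; omega
  have ht1ab : t + 1 ∈ Finset.Ico a b := by
    simp only [Finset.mem_Ico] at ht ⊢; omega
  unfold isoZ_DF
  rw [ContinuousLinearMap.sum_apply]
  rw [← Finset.sum_subset (s₁ := ({t, t + 1} : Finset ℤ))
    (by intro x hx; simp only [Finset.mem_insert, Finset.mem_singleton] at hx
        rcases hx with rfl | rfl
        exacts [htab, ht1ab])
    (by intro t' ht' hnt'
        simp only [Finset.mem_insert, Finset.mem_singleton, not_or] at hnt'
        have harg : ((isoZ_pmap a b (t' + 1)).prod (isoZ_pmap a b (t' + 1) - isoZ_pmap a b t'))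
            (Pi.single ⟨t + 1, hmem⟩ 1) = 0 := by
          have h1 : isoZ_pmap a b (t' + 1) (Pi.single ⟨t + 1, hmem⟩ 1) = 0 := by
            rw [isoZ_pmap_single, if_neg]; omega
          have h2 : isoZ_pmap a b t' (Pi.single ⟨t + 1, hmem⟩ 1) = 0 := by
            rw [isoZ_pmap_single, if_neg]; omega
          simp [ContinuousLinearMap.prod_apply, ContinuousLinearMap.sub_apply, h1, h2,
            Prod.ext_iff]
        rw [ContinuousLinearMap.comp_apply, harg, map_zero])]
  rw [Finset.sum_pair (by omega : t ≠ t + 1)]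
  have harg1 : ((isoZ_pmap a b (t + 1)).prod (isoZ_pmap a b (t + 1) - isoZ_pmap a b t))
      (Pi.single ⟨t + 1, hmem⟩ 1) = ((1 : ℝ), (1 : ℝ)) := by
    have h1 : isoZ_pmap a b (t + 1) (Pi.single ⟨t + 1, hmem⟩ 1) = 1 := by
      rw [isoZ_pmap_single, if_pos rfl]
    have h2 : isoZ_pmap a b t (Pi.single ⟨t + 1, hmem⟩ 1) = 0 := by
      rw [isoZ_pmap_single, if_neg]; omega
    simp [ContinuousLinearMap.prod_apply, ContinuousLinearMap.sub_apply, h1, h2]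
  have harg2 : ((isoZ_pmap a b (t + 1 + 1)).prod (isoZ_pmap a b (t + 1 + 1) - isoZ_pmap a b (t + 1)))
      (Pi.single ⟨t + 1, hmem⟩ 1) = ((0 : ℝ), (-1 : ℝ)) := by
    have h1 : isoZ_pmap a b (t + 1 + 1) (Pi.single ⟨t + 1, hmem⟩ 1) = 0 := by
      rw [isoZ_pmap_single, if_neg]; omega
    have h2 : isoZ_pmap a b (t + 1) (Pi.single ⟨t + 1, hmem⟩ 1) = 1 := by
      rw [isoZ_pmap_single, if_pos rfl]
    simp [ContinuousLinearMap.prod_apply, ContinuousLinearMap.sub_apply, h1, h2]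
  rw [ContinuousLinearMap.comp_apply, ContinuousLinearMap.comp_apply, harg1, harg2]
  have hd1 : DifferentiableAt ℝ (fun p : ℝ × ℝ => F t p.1 p.2)
      (ystar (t + 1), ystar (t + 1) - ystar t) :=
    ((hF t htab).differentiable one_ne_zero).differentiableAt
  have hd2 : DifferentiableAt ℝ (fun p : ℝ × ℝ => F (t + 1) p.1 p.2)
      (ystar (t + 1 + 1), ystar (t + 1 + 1) - ystar (t + 1)) :=
    ((hF (t + 1) ht1ab).differentiable one_ne_zero).differentiableAt
  have e1 : ((1 : ℝ), (1 : ℝ)) = ((1 : ℝ), (0 : ℝ)) + ((0 : ℝ), (1 : ℝ)) := by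
    simp
  have e2 : ((0 : ℝ), (-1 : ℝ)) = -((0 : ℝ), (1 : ℝ)) := by
    simp
  rw [e1, map_add, e2, map_neg, isoZ_fderiv_fst _ _ _ hd1, isoZ_fderiv_snd _ _ _ hd1,
    isoZ_fderiv_snd _ _ _ hd2]
  have h12 : t + 1 + 1 = t + 2 := by ring
  rw [h12]
  ring





theorem isoperimetric_necessary_condition_Z
    (a b : ℤ) (hab : a < b) (l ya yb : ℝ)
    (L g : ℤ → ℝ → ℝ → ℝ)
    (hL : ∀ t ∈ Finset.Ico a b, ContDiff ℝ 1 (fun p : ℝ × ℝ => L t p.1 p.2))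
    (hg : ∀ t ∈ Finset.Ico a b, ContDiff ℝ 1 (fun p : ℝ × ℝ => g t p.1 p.2))
    (ystar : ℤ → ℝ)
    (hba : ystar a = ya) (hbb : ystar b = yb)
    (hI : ∑ t ∈ Finset.Ico a b, g t (ystar (t + 1)) (ystar (t + 1) - ystar t) = l)
    (hmin : ∃ ε > (0 : ℝ), ∀ y : ℤ → ℝ,
      y a = ya → y b = yb →
      (∑ t ∈ Finset.Ico a b, g t (y (t + 1)) (y (t + 1) - y t)) = l →
      (∀ t ∈ Finset.Icc a b, |y t - ystar t| < ε) →
      (∑ t ∈ Finset.Ico a b, L t (ystar (t + 1)) (ystar (t + 1) - ystar t)) ≤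
        ∑ t ∈ Finset.Ico a b, L t (y (t + 1)) (y (t + 1) - y t))
    (hnotext : ¬ ∃ c : ℝ, ∀ t ∈ Finset.Ico a b,
      deriv (fun v => g t (ystar (t + 1)) v) (ystar (t + 1) - ystar t) -
        (∑ τ ∈ Finset.Ico a t,
          deriv (fun x => g τ x (ystar (τ + 1) - ystar τ)) (ystar (τ + 1))) = c) :
    ∃ lam : ℝ, ∀ t ∈ Finset.Ico a (b - 1),
      ((deriv (fun v => L (t + 1) (ystar (t + 2)) v) (ystar (t + 2) - ystar (t + 1)) -
          lam * deriv (fun v => g (t + 1) (ystar (t + 2)) v) (ystar (t + 2) - ystar (t + 1))) -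
        (deriv (fun v => L t (ystar (t + 1)) v) (ystar (t + 1) - ystar t) -
          lam * deriv (fun v => g t (ystar (t + 1)) v) (ystar (t + 1) - ystar t))) -
      (deriv (fun x => L t x (ystar (t + 1) - ystar t)) (ystar (t + 1)) -
        lam * deriv (fun x => g t x (ystar (t + 1) - ystar t)) (ystar (t + 1))) = 0 := by
  classical
  set ustar : {x // x ∈ Finset.Ioo a b} → ℝ := fun s => ystar s.1 with hustar
  set Jfun : ({x // x ∈ Finset.Ioo a b} → ℝ) → ℝ := fun u =>
    ∑ t ∈ Finset.Ico a b,
      L t (isoZ_extF a b ystar u (t + 1)) (isoZ_extF a b ystar u (t + 1) - isoZ_extF a b ystar u t)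
    with hJfun
  set Ifun : ({x // x ∈ Finset.Ioo a b} → ℝ) → ℝ := fun u =>
    ∑ t ∈ Finset.Ico a b,
      g t (isoZ_extF a b ystar u (t + 1)) (isoZ_extF a b ystar u (t + 1) - isoZ_extF a b ystar u t)
    with hIfun
  have hJstar : Jfun ustar = ∑ t ∈ Finset.Ico a b,
      L t (ystar (t + 1)) (ystar (t + 1) - ystar t) := by
    simp only [hJfun, hustar, isoZ_extF_star]
  have hIstar : Ifun ustar = l := by
    simp only [hIfun, hustar, isoZ_extF_star]
    exact hI
  have hJ' := isoZ_hasStrict_JF a b ystar L hL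
  have hI' := isoZ_hasStrict_JF a b ystar g hg
  -- local extremum on the constraint set
  obtain ⟨ε, hε, hminv⟩ := hmin
  have key : ∀ u, dist u ustar < ε → Ifun u = Ifun ustar → Jfun ustar ≤ Jfun u := by
    intro u hu hconstr
    rw [hJstar]
    refine hminv (isoZ_extF a b ystar u) ?_ ?_ ?_ ?_
    · rw [show isoZ_extF a b ystar u a = ystar a by
        unfold isoZ_extF; rw [dif_neg (by simp)], hba]
    · rw [show isoZ_extF a b ystar u b = ystar b by
        unfold isoZ_extF; rw [dif_neg (by simp)], hbb]
    · exact hconstr.trans hIstar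
    · intro t _
      by_cases h : t ∈ Finset.Ioo a b
      · have : isoZ_extF a b ystar u t = u ⟨t, h⟩ := by unfold isoZ_extF; rw [dif_pos h]
        rw [this]
        have h1 : ystar t = ustar ⟨t, h⟩ := rfl
        rw [h1, ← Real.dist_eq]
        exact lt_of_le_of_lt (dist_le_pi_dist u ustar ⟨t, h⟩) hu
      · have : isoZ_extF a b ystar u t = ystar t := by unfold isoZ_extF; rw [dif_neg h]
        rw [this]
        simpa using hε
  have hextr : IsLocalExtrOn Jfun {u | Ifun u = Ifun ustar} ustar := by
    left
    show ∀ᶠ u in nhdsWithin ustar {u | Ifun u = Ifun ustar}, Jfun ustar ≤ Jfun u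
    rw [eventually_nhdsWithin_iff]
    filter_upwards [Metric.ball_mem_nhds ustar hε] with u hu hmem
    exact key u hu hmem
  obtain ⟨r, s0, hrs, heq⟩ :=
    hextr.exists_multipliers_of_hasStrictFDerivAt_1d hI' hJ'
  -- abbreviations for partial derivatives along ystar
  set GV : ℤ → ℝ := fun t => deriv (fun v => g t (ystar (t + 1)) v) (ystar (t + 1) - ystar t)
    with hGV
  set GX : ℤ → ℝ := fun t => deriv (fun x => g t x (ystar (t + 1) - ystar t)) (ystar (t + 1))
    with hGX
  set LV : ℤ → ℝ := fun t => deriv (fun v => L t (ystar (t + 1)) v) (ystar (t + 1) - ystar t)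
    with hLV
  set LX : ℤ → ℝ := fun t => deriv (fun x => L t x (ystar (t + 1) - ystar t)) (ystar (t + 1))
    with hLX
  have hmemIoo : ∀ t ∈ Finset.Ico a (b - 1), t + 1 ∈ Finset.Ioo a b := by
    intro t ht; simp only [Finset.mem_Ico] at ht; simp only [Finset.mem_Ioo]; omega
  have heval : ∀ t (ht : t ∈ Finset.Ico a (b - 1)),
      r * (GX t + GV t - GV (t + 1)) + s0 * (LX t + LV t - LV (t + 1)) = 0 := by
    intro t ht
    have h0 := DFunLike.congr_fun heq (Pi.single ⟨t + 1, hmemIoo t ht⟩ 1)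
    simp only [ContinuousLinearMap.add_apply, ContinuousLinearMap.coe_smul',
      Pi.smul_apply, ContinuousLinearMap.zero_apply, smul_eq_mul] at h0
    rw [isoZ_DF_single a b ystar g hg t ht (hmemIoo t ht),
      isoZ_DF_single a b ystar L hL t ht (hmemIoo t ht)] at h0
    simp only [hGV, hGX, hLV, hLX]
    rw [show t + 1 + 1 = t + 2 from by ring]
    linarith [h0]
  by_cases hs : s0 = 0
  · exfalso
    have hr : r ≠ 0 := by
      intro hr0
      exact hrs (by rw [hr0, hs]; rfl)
    have hDg : ∀ t ∈ Finset.Ico a (b - 1), GX t + GV t - GV (t + 1) = 0 := by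
      intro t ht
      have := heval t ht
      rw [hs, zero_mul, add_zero] at this
      have := mul_eq_zero.mp this
      rcases this with h | h
      · exact absurd h hr
      · exact h
    apply hnotext
    refine ⟨GV a - ∑ τ ∈ Finset.Ico a a, GX τ, ?_⟩
    have main : ∀ t, a ≤ t → (t < b →
        GV t - ∑ τ ∈ Finset.Ico a t, GX τ = GV a - ∑ τ ∈ Finset.Ico a a, GX τ) := by
      refine fun t ht => Int.le_induction
        (motive := fun t _ => t < b →
          GV t - ∑ τ ∈ Finset.Ico a t, GX τ = GV a - ∑ τ ∈ Finset.Ico a a, GX τ)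
        ?_ ?_ t ht
      · intro _; rfl
      · intro n hn ih hnb
        have hn' : n < b := by omega
        have hnn : n ∈ Finset.Ico a (b - 1) := by simp only [Finset.mem_Ico]; omega
        have hd := hDg n hnn
        have hins : Finset.Ico a (n + 1) = insert n (Finset.Ico a n) := by
          ext x; simp only [Finset.mem_Ico, Finset.mem_insert]; omega
        rw [hins, Finset.sum_insert (by simp [Finset.mem_Ico])]
        have hihn := ih hn'
        have hgv : GV (n + 1) = GX n + GV n := by linarith
        rw [hgv]
        linarith [hihn]
    intro t ht
    simp only [Finset.mem_Ico] at ht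
    exact main t ht.1 ht.2
  · refine ⟨-r / s0, ?_⟩
    intro t ht
    have h0 := heval t ht
    simp only [hGV, hGX, hLV, hLX] at h0
    rw [show t + 1 + 1 = t + 2 from by ring] at h0
    field_simp
    linarith [h0]
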